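/- Let (X, μ) be a probability space, f ∈ L∞(X,μ)⁺, w ≥ ∫_X f dμ, and c the unique level with ∫_X max{f,c} dμ = w; set f_c = max{f,c}. If h ∈ L∞(X,μ)⁺ satisfies f ≤ h a.e. and ∫_X h dμ ≥ w, then for every non-decreasing convex φ : ℝ⁺ → ℝ⁺, ∫_X φ(f_c) dμ ≤ ∫_X φ(h) dμ. Moreover, if equality holds for some non-decreasing strictly convex φ, then h = f_c almost everywhere. -/

import Mathlib

open MeasureTheory Set Filter

private lemma wf_affine_concave (c s k : ℝ) :
    ConcaveOn ℝ (Ici (0:ℝ)) (fun t : ℝ => k + s * (t - c)) := by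
  refine ⟨convex_Ici 0, fun x _ y _ a b ha hb hab => le_of_eq ?_⟩
  simp only [smul_eq_mul]
  have hb' : b = 1 - a := by linarith
  subst hb'; ring

private lemma wf_subgradient (φ : ℝ → ℝ) (hφ : ConvexOn ℝ (Ici (0:ℝ)) φ)
    (hmono : MonotoneOn φ (Ici (0:ℝ))) (c : ℝ) (hc : 0 ≤ c) :
    ∃ s : ℝ, 0 ≤ s ∧ ∀ t, 0 ≤ t → φ c + s * (t - c) ≤ φ t := by
  set S : Set ℝ := (fun t => (φ t - φ c) / (t - c)) '' Ioi c with hS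
  have hne : S.Nonempty := ⟨_, ⟨c + 1, by simp, rfl⟩⟩
  have hlb : ∀ y ∈ S, (0:ℝ) ≤ y := by
    rintro y ⟨t, ht, rfl⟩
    rw [mem_Ioi] at ht
    have h1 : φ c ≤ φ t := hmono hc (hc.trans ht.le) ht.le
    exact div_nonneg (by linarith) (by linarith)
  have hbdd : BddBelow S := ⟨0, fun y hy => hlb y hy⟩
  refine ⟨sInf S, le_csInf hne hlb, ?_⟩
  intro t ht
  rcases lt_trichotomy t c with h1 | h1 | h1
  · have key : (φ c - φ t) / (c - t) ≤ sInf S := by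
      apply le_csInf hne
      rintro y ⟨u, hu, rfl⟩
      rw [mem_Ioi] at hu
      exact hφ.slope_mono_adjacent ht (hc.trans hu.le) h1 hu
    have hct : 0 < c - t := by linarith
    rw [div_le_iff₀ hct] at key
    nlinarith [key]
  · simp [h1]
  · have key : sInf S ≤ (φ t - φ c) / (t - c) := csInf_le hbdd ⟨t, h1, rfl⟩
    have htc : 0 < t - c := by linarith
    rw [le_div_iff₀ htc] at key
    linarith

private lemma wf_integrable {X : Type*} [MeasurableSpace X] (μ : Measure X)
    [IsProbabilityMeasure μ] (φ : ℝ → ℝ) (hmono : MonotoneOn φ (Ici (0:ℝ)))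
    (g : X → ℝ) (hgm : Measurable g) (hg0 : ∀ᵐ x ∂μ, 0 ≤ g x)
    (C : ℝ) (hgC : ∀ᵐ x ∂μ, g x ≤ C) :
    Integrable (fun x => φ (g x)) μ := by
  have hmax : Monotone (fun t : ℝ => φ (max t 0)) := fun a b hab =>
    hmono (mem_Ici.2 (le_max_right _ _)) (mem_Ici.2 (le_max_right _ _)) (max_le_max hab le_rfl)
  have hm : Measurable fun x => φ (max (g x) 0) := hmax.measurable.comp hgm
  have heq : (fun x => φ (g x)) =ᵐ[μ] fun x => φ (max (g x) 0) := by
    filter_upwards [hg0] with x hx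
    rw [max_eq_left hx]
  rw [integrable_congr heq]
  refine Integrable.mono' (integrable_const (max |φ 0| |φ (max C 0)|))
    hm.aestronglyMeasurable ?_
  filter_upwards [hg0, hgC] with x h0 hC
  have hx0 : (0:ℝ) ≤ max (g x) 0 := le_max_right _ _
  have hxC : max (g x) 0 ≤ max C 0 := max_le_max hC le_rfl
  have h1 : φ 0 ≤ φ (max (g x) 0) := hmono (le_refl (0:ℝ)) hx0 hx0
  have h2 : φ (max (g x) 0) ≤ φ (max C 0) := hmono hx0 (mem_Ici.2 (le_max_right _ _)) hxC
  rw [Real.norm_eq_abs, abs_le]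
  constructor
  · have := neg_abs_le (φ 0)
    have h3 : -max |φ 0| |φ (max C 0)| ≤ -|φ 0| := by
      simp [le_max_left]
    linarith
  · have := le_abs_self (φ (max C 0))
    have h3 : |φ (max C 0)| ≤ max |φ 0| |φ (max C 0)| := le_max_right _ _
    linarith


/-- Optimality of the water-filling `f_c = max{f,c}` for convex potentials,
with essential uniqueness in the strictly convex case. -/
theorem waterFilling_convex_optimal {X : Type*} [MeasurableSpace X]
    (μ : Measure X) [IsProbabilityMeasure μ] (f : X → ℝ) (hfm : Measurable f)
    (hf0 : ∀ᵐ x ∂μ, 0 ≤ f x) (hfb : ∃ C, ∀ᵐ x ∂μ, f x ≤ C)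
    (w : ℝ) (hw : (∫ x, f x ∂μ) ≤ w)
    (c : ℝ) (hc : essInf f μ ≤ c) (hcw : (∫ x, max (f x) c ∂μ) = w)
    (h : X → ℝ) (hhm : Measurable h) (hh0 : ∀ᵐ x ∂μ, 0 ≤ h x)
    (hhb : ∃ C, ∀ᵐ x ∂μ, h x ≤ C)
    (hfh : ∀ᵐ x ∂μ, f x ≤ h x) (hhw : w ≤ ∫ x, h x ∂μ) :
    (∀ φ : ℝ → ℝ, ConvexOn ℝ (Ici 0) φ → MonotoneOn φ (Ici 0) →
        (∀ t, 0 ≤ t → 0 ≤ φ t) →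
        (∫ x, φ (max (f x) c) ∂μ) ≤ ∫ x, φ (h x) ∂μ) ∧
    (∀ φ : ℝ → ℝ, StrictConvexOn ℝ (Ici 0) φ → MonotoneOn φ (Ici 0) →
        (∀ t, 0 ≤ t → 0 ≤ φ t) →
        (∫ x, φ (max (f x) c) ∂μ) = ∫ x, φ (h x) ∂μ →
        h =ᵐ[μ] fun x => max (f x) c) := by
  obtain ⟨Cf, hfC⟩ := hfb
  obtain ⟨Ch, hhC⟩ := hhb
  -- c is nonnegative
  have c0 : (0:ℝ) ≤ c := by
    refine le_trans ?_ hc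
    refine Filter.le_liminf_of_le ?_ hf0
    exact Filter.IsBoundedUnder.isCoboundedUnder_ge ⟨Cf, by simpa [Filter.eventually_map] using hfC⟩
  -- facts about F = max f c
  have hFm : Measurable fun x => max (f x) c := hfm.max measurable_const
  have hF0 : ∀ x, (0:ℝ) ≤ max (f x) c := fun x => c0.trans (le_max_right _ _)
  have hFC : ∀ᵐ x ∂μ, max (f x) c ≤ max Cf c := by
    filter_upwards [hfC] with x hx
    exact max_le_max hx le_rfl
  have idmono : MonotoneOn (fun t : ℝ => t) (Ici (0:ℝ)) := fun a _ b _ hab => hab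
  have hFint : Integrable (fun x => max (f x) c) μ :=
    wf_integrable μ (fun t => t) idmono _ hFm (Eventually.of_forall hF0) (max Cf c) hFC
  have hhint : Integrable h μ := wf_integrable μ (fun t => t) idmono h hhm hh0 Ch hhC
  -- the key statement
  have key : ∀ φ : ℝ → ℝ, ConvexOn ℝ (Ici 0) φ → MonotoneOn φ (Ici 0) →
      ∃ s : ℝ, 0 ≤ s ∧ (∀ t, 0 ≤ t → φ c + s * (t - c) ≤ φ t) ∧
        (∫ x, φ (max (f x) c) ∂μ) ≤ (∫ x, φ (h x) ∂μ) ∧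
        ((∫ x, φ (max (f x) c) ∂μ) = (∫ x, φ (h x) ∂μ) →
          ∀ᵐ x ∂μ, φ (h x) - (φ c + s * (h x - c))
            = φ (max (f x) c) - (φ c + s * (max (f x) c - c))) := by
    intro φ hconv hmono
    obtain ⟨s, hs0, hsub⟩ := wf_subgradient φ hconv hmono c c0
    set ψ : ℝ → ℝ := fun t => φ t - (φ c + s * (t - c)) with hψdef
    have hψc : ψ c = 0 := by simp [hψdef]
    have hψ0 : ∀ t, 0 ≤ t → 0 ≤ ψ t := by
      intro t ht
      have := hsub t ht
      simp only [hψdef]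
      linarith
    have hψconv : ConvexOn ℝ (Ici (0:ℝ)) ψ :=
      hconv.sub (wf_affine_concave c s (φ c))
    have hψmono : ∀ a b, c ≤ a → a ≤ b → ψ a ≤ ψ b := by
      intro a b hca hab
      rcases eq_or_lt_of_le hab with rfl | hab'
      · exact le_rfl
      rcases eq_or_lt_of_le hca with rfl | hca'
      · rw [hψc]; exact hψ0 b (c0.trans (hca.trans hab))
      · refine hψconv.le_right_of_left_le'' (mem_Ici.2 c0)
          (mem_Ici.2 (c0.trans (hca.trans hab))) hca' hab ?_
        rw [hψc]; exact hψ0 a (c0.trans hca)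
    -- integrability
    have hφF : Integrable (fun x => φ (max (f x) c)) μ :=
      wf_integrable μ φ hmono _ hFm (Eventually.of_forall hF0) (max Cf c) hFC
    have hφh : Integrable (fun x => φ (h x)) μ := wf_integrable μ φ hmono h hhm hh0 Ch hhC
    have haffF : Integrable (fun x => φ c + s * (max (f x) c - c)) μ :=
      (integrable_const (φ c)).add ((hFint.sub (integrable_const c)).const_mul s)
    have haffh : Integrable (fun x => φ c + s * (h x - c)) μ :=
      (integrable_const (φ c)).add ((hhint.sub (integrable_const c)).const_mul s)
    have hψF : Integrable (fun x => ψ (max (f x) c)) μ := hφF.sub haffF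
    have hψh : Integrable (fun x => ψ (h x)) μ := hφh.sub haffh
    -- pointwise comparison
    have hpt : ∀ᵐ x ∂μ, ψ (max (f x) c) ≤ ψ (h x) := by
      filter_upwards [hh0, hfh] with x h0 hfx
      rcases le_total (f x) c with hx | hx
      · rw [max_eq_right hx, hψc]
        exact hψ0 _ h0
      · rw [max_eq_left hx]
        exact hψmono _ _ hx hfx
    -- integral decompositions
    have hint : ∀ g : X → ℝ, Integrable g μ → Integrable (fun x => φ (g x)) μ →
        (∫ x, ψ (g x) ∂μ) = (∫ x, φ (g x) ∂μ) - (φ c + s * ((∫ x, g x ∂μ) - c)) := by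
      intro g hgint hφg
      have h2 : Integrable (fun x => g x - c) μ := hgint.sub (integrable_const c)
      have h1 : Integrable (fun x => s * (g x - c)) μ := h2.const_mul s
      have haff : Integrable (fun x => φ c + s * (g x - c)) μ :=
        (integrable_const (φ c)).add h1
      have e2 : (∫ x, g x - c ∂μ) = (∫ x, g x ∂μ) - c := by
        rw [integral_sub hgint (integrable_const c), integral_const]
        simp
      calc (∫ x, ψ (g x) ∂μ) = ∫ x, φ (g x) - (φ c + s * (g x - c)) ∂μ := rfl
        _ = (∫ x, φ (g x) ∂μ) - ∫ x, φ c + s * (g x - c) ∂μ := integral_sub hφg haff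
        _ = (∫ x, φ (g x) ∂μ) - (φ c + s * ((∫ x, g x ∂μ) - c)) := by
            rw [integral_add (integrable_const (φ c)) h1, integral_const,
              integral_const_mul, e2]
            simp
    have eF := hint _ hFint hφF
    have eh := hint h hhint hφh
    have hψle : (∫ x, ψ (max (f x) c) ∂μ) ≤ ∫ x, ψ (h x) ∂μ :=
      integral_mono_ae hψF hψh hpt
    have hsle : s * ((∫ x, max (f x) c ∂μ) - c) ≤ s * ((∫ x, h x ∂μ) - c) := by
      apply mul_le_mul_of_nonneg_left _ hs0
      rw [hcw]; linarith
    refine ⟨s, hs0, hsub, by linarith, ?_⟩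
    intro heq
    have hzero : (∫ x, ψ (h x) - ψ (max (f x) c) ∂μ) = 0 := by
      rw [integral_sub hψh hψF]
      linarith
    have := (integral_eq_zero_iff_of_nonneg_ae
      (by filter_upwards [hpt] with x hx; simpa using hx) (hψh.sub hψF)).mp hzero
    filter_upwards [this] with x hx
    have hx' : ψ (h x) - ψ (max (f x) c) = 0 := hx
    simp only [hψdef] at hx'
    linarith
  constructor
  · intro φ hconv hmono _
    obtain ⟨s, _, _, hle, _⟩ := key φ hconv hmono
    exact hle
  · intro φ hsconv hmono _ heq
    obtain ⟨s, hs0, hsub, _, huniq⟩ := key φ hsconv.convexOn hmono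
    have hae := huniq heq
    set ψ : ℝ → ℝ := fun t => φ t - (φ c + s * (t - c)) with hψdef
    have hψc : ψ c = 0 := by simp [hψdef]
    have hψ0 : ∀ t, 0 ≤ t → 0 ≤ ψ t := by
      intro t ht
      have := hsub t ht
      simp only [hψdef]
      linarith
    have hψsconv : StrictConvexOn ℝ (Ici (0:ℝ)) ψ :=
      hsconv.sub_concaveOn (wf_affine_concave c s (φ c))
    have hzero : ∀ t, 0 ≤ t → ψ t = 0 → t = c := by
      intro t ht h0
      by_contra hne
      have hmid := hψsconv.2 (mem_Ici.2 ht) (mem_Ici.2 c0) hne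
        (by norm_num : (0:ℝ) < 1/2) (by norm_num : (0:ℝ) < 1/2) (by norm_num)
      rw [h0, hψc] at hmid
      simp only [smul_eq_mul] at hmid
      have hm0 : (0:ℝ) ≤ (1/2 : ℝ) * t + (1/2 : ℝ) * c := by positivity
      have := hψ0 _ hm0
      linarith
    have hsmono : ∀ a b, c ≤ a → a < b → ψ a < ψ b := by
      intro a b hca hab
      rcases eq_or_lt_of_le hca with rfl | hca'
      · have hb0 : 0 ≤ ψ b := hψ0 b (c0.trans (hca.trans hab.le))
        rcases hb0.lt_or_eq with hlt | heq'
        · rw [hψc]; exact hlt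
        · exact absurd (hzero b (c0.trans hab.le) heq'.symm) (by intro hbc; linarith)
      · have hbc : c < b := hca'.trans hab
        have hu : (0:ℝ) < (b - a) / (b - c) := by
          apply div_pos <;> linarith
        have hv : (0:ℝ) < (a - c) / (b - c) := by
          apply div_pos <;> linarith
        have hne : b - c ≠ 0 := sub_ne_zero.mpr hbc.ne'
        have huv : (b - a) / (b - c) + (a - c) / (b - c) = 1 := by
          rw [← add_div, show b - a + (a - c) = b - c by ring, div_self hne]
        have hcomb : (b - a) / (b - c) * c + (a - c) / (b - c) * b = a := by
          field_simp
          ring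
        have hkey := hψsconv.2 (mem_Ici.2 c0)
          (mem_Ici.2 (c0.trans hbc.le)) (ne_of_lt hbc) hu hv huv
        simp only [smul_eq_mul, hcomb, hψc, mul_zero, zero_add] at hkey
        have hb0 : 0 ≤ ψ b := hψ0 b (c0.trans hbc.le)
        have hv1 : (a - c) / (b - c) ≤ 1 := by
          rw [div_le_one (by linarith)]; linarith
        have hvb : (a - c) / (b - c) * ψ b ≤ ψ b := mul_le_of_le_one_left hb0 hv1
        exact hkey.trans_le hvb
    filter_upwards [hae, hfh, hh0] with x hψeq hfx h0
    have hψeq' : ψ (h x) = ψ (max (f x) c) := hψeq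
    rcases le_total (f x) c with hx | hx
    · rw [max_eq_right hx] at hψeq' ⊢
      rw [hψc] at hψeq'
      exact hzero _ h0 hψeq'
    · rw [max_eq_left hx] at hψeq' ⊢
      rcases eq_or_lt_of_le hfx with heq'' | hlt
      · exact heq''.symm
      · exact absurd hψeq' (ne_of_gt (hsmono _ _ hx hlt))
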